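/- Let ψ ∈ H ⊗ H and ψ̃ ∈ H̃ ⊗ H̃ be maximally entangled states with dim H ≤ dim H̃, and let ε ≥ 0. Suppose there exist isometries V_A : H → H̃ ⊗ K_A and V_B : H → H̃ ⊗ K_B and a unit vector aux ∈ K_A ⊗ K_B such that ‖(V_A ⊗ V_B)ψ − ψ̃ ⊗ aux‖ ≤ ε. Then dim H ≥ (1 − ε²)·dim H̃. -/

import Mathlib

open scoped BigOperators Kronecker ComplexOrder
open Matrix

noncomputable section

abbrev Op (n : ℕ) := Matrix (Fin n) (Fin n) ℂ

def inn {I : Type*} [Fintype I] (v w : I → ℂ) : ℂ := ∑ i, star (v i) * w i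

def nrm {I : Type*} [Fintype I] (v : I → ℂ) : ℝ := Real.sqrt (inn v v).re

def IsPOVM {n m : ℕ} (A : Fin m → Op n) : Prop :=
  (∀ a, (A a).PosSemidef) ∧ (∑ a, A a) = 1

def IsPVM {n m : ℕ} (A : Fin m → Op n) : Prop :=
  (∀ a, (A a).IsHermitian ∧ A a * A a = A a) ∧ (∑ a, A a) = 1

structure Game (q m : ℕ) where
  nu : Fin q → Fin q → ℝ
  nu_nonneg : ∀ x y, 0 ≤ nu x y
  nu_sum : (∑ x, ∑ y, nu x y) = 1
  D : Fin m → Fin m → Fin q → Fin q → Bool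

structure Strategy (q m nA nB : ℕ) where
  psi : Fin nA × Fin nB → ℂ
  psi_unit : inn psi psi = 1
  A : Fin q → Fin m → Op nA
  B : Fin q → Fin m → Op nB
  A_povm : ∀ x, IsPOVM (A x)
  B_povm : ∀ y, IsPOVM (B y)

def corrRaw {q m nA nB : ℕ} (psi : Fin nA × Fin nB → ℂ)
    (A : Fin q → Fin m → Op nA) (B : Fin q → Fin m → Op nB)
    (x y : Fin q) (a b : Fin m) : ℂ :=
  inn psi ((A x a ⊗ₖ B y b).mulVec psi)

def Strategy.corr {q m nA nB : ℕ} (S : Strategy q m nA nB) :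
    Fin q → Fin q → Fin m → Fin m → ℂ :=
  corrRaw S.psi S.A S.B

def winProbRaw {q m nA nB : ℕ} (G : Game q m) (psi : Fin nA × Fin nB → ℂ)
    (A : Fin q → Fin m → Op nA) (B : Fin q → Fin m → Op nB) : ℝ :=
  ∑ x, ∑ y, G.nu x y *
    ∑ a, ∑ b, (if G.D a b x y then (1:ℝ) else 0) * (corrRaw psi A B x y a b).re

def winProb {q m nA nB : ℕ} (G : Game q m) (S : Strategy q m nA nB) : ℝ :=
  winProbRaw G S.psi S.A S.B

def qval {q m : ℕ} (G : Game q m) : ℝ :=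
  sSup {w : ℝ | ∃ (nA nB : ℕ) (S : Strategy q m nA nB), winProb G S = w}

def margA {q : ℕ} (nu : Fin q → Fin q → ℝ) (x : Fin q) : ℝ := ∑ y, nu x y
def margB {q : ℕ} (nu : Fin q → Fin q → ℝ) (y : Fin q) : ℝ := ∑ x, nu x y

def dsyncRaw {q m nA nB : ℕ} (psi : Fin nA × Fin nB → ℂ)
    (A : Fin q → Fin m → Op nA) (B : Fin q → Fin m → Op nB) (mu : Fin q → ℝ) : ℝ :=
  1 - ∑ x, mu x * ∑ a, (corrRaw psi A B x x a a).re

def Strategy.dsync {q m nA nB : ℕ} (S : Strategy q m nA nB) (mu : Fin q → ℝ) : ℝ :=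
  dsyncRaw S.psi S.A S.B mu

def Game.Symm {q m : ℕ} (G : Game q m) : Prop :=
  (∀ x y, G.nu x y = G.nu y x) ∧ ∀ a b x y, G.D a b x y = G.D b a y x

def Game.Synchronous {q m : ℕ} (G : Game q m) : Prop :=
  G.Symm ∧ (∀ x, 0 < G.nu x x) ∧ ∀ x a b, a ≠ b → G.D a b x x = false

def Game.BetaSync {q m : ℕ} (G : Game q m) (β : ℝ) : Prop :=
  G.Synchronous ∧ ∀ x, β * ∑ y, G.nu x y ≤ G.nu x x

def Game.Perfect {q m : ℕ} (G : Game q m) : Prop :=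
  ∃ (nA nB : ℕ) (S : Strategy q m nA nB), winProb G S = 1

def IsPME {q m n : ℕ} (S : Strategy q m n n) : Prop :=
  (∀ x, IsPVM (S.A x)) ∧
  ∃ U : Op n, Uᴴ * U = 1 ∧
    (∀ p, S.psi p = ((Real.sqrt n)⁻¹ : ℂ) * ∑ i, U p.1 i * U p.2 i) ∧
    (∀ x a, S.B x a = U * (Uᴴ * S.A x a * U)ᵀ * Uᴴ)

def dilTarget {nA nB kA kB : ℕ} (psi : Fin nA × Fin nB → ℂ)
    (aux : Fin kA × Fin kB → ℂ) :
    (Fin nA × Fin kA) × (Fin nB × Fin kB) → ℂ :=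
  fun p => psi (p.1.1, p.2.1) * aux (p.1.2, p.2.2)

def DilIneqs {q m nA nB tA tB kA kB : ℕ}
    (S : Strategy q m nA nB) (T : Strategy q m tA tB)
    (VA : Matrix (Fin tA × Fin kA) (Fin nA) ℂ)
    (VB : Matrix (Fin tB × Fin kB) (Fin nB) ℂ)
    (aux : Fin kA × Fin kB → ℂ) (ε : ℝ) (mu : Fin q → Fin q → ℝ) : Prop :=
  nrm (fun p => (VA ⊗ₖ VB).mulVec S.psi p - dilTarget T.psi aux p) ≤ ε ∧
  Real.sqrt (∑ x, margA mu x * ∑ a,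
    (nrm (fun p => (VA ⊗ₖ VB).mulVec ((S.A x a ⊗ₖ (1 : Op nB)).mulVec S.psi) p
      - dilTarget ((T.A x a ⊗ₖ (1 : Op tB)).mulVec T.psi) aux p)) ^ 2) ≤ ε ∧
  Real.sqrt (∑ y, margB mu y * ∑ b,
    (nrm (fun p => (VA ⊗ₖ VB).mulVec (((1 : Op nA) ⊗ₖ S.B y b).mulVec S.psi) p
      - dilTarget (((1 : Op tA) ⊗ₖ T.B y b).mulVec T.psi) aux p)) ^ 2) ≤ ε

def LocalDilation {q m nA nB tA tB : ℕ}
    (S : Strategy q m nA nB) (T : Strategy q m tA tB) (ε : ℝ)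
    (mu : Fin q → Fin q → ℝ) : Prop :=
  ∃ (kA kB : ℕ) (VA : Matrix (Fin tA × Fin kA) (Fin nA) ℂ)
    (VB : Matrix (Fin tB × Fin kB) (Fin nB) ℂ) (aux : Fin kA × Fin kB → ℂ),
    VAᴴ * VA = 1 ∧ VBᴴ * VB = 1 ∧ inn aux aux = 1 ∧ DilIneqs S T VA VB aux ε mu

def SelfTestsPME {q m tA tB : ℕ} (G : Game q m) (T : Strategy q m tA tB)
    (κ : ℝ → ℝ) (nuh : Fin q → Fin q → ℝ) : Prop :=
  ∀ ε : ℝ, 0 ≤ ε → ∀ (n : ℕ) (S : Strategy q m n n), IsPME S →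
    qval G - ε ≤ winProb G S → LocalDilation S T (κ ε) nuh

def SelfTestsAll {q m tA tB : ℕ} (G : Game q m) (T : Strategy q m tA tB)
    (κ : ℝ → ℝ) (nuh : Fin q → Fin q → ℝ) : Prop :=
  ∀ ε : ℝ, 0 ≤ ε → ∀ (nA nB : ℕ) (S : Strategy q m nA nB),
    qval G - ε ≤ winProb G S → LocalDilation S T (κ ε) nuh

def SelfTestsClass {q m tA tB : ℕ} (G : Game q m) (T : Strategy q m tA tB)
    (κ : ℝ → ℝ) (nuh : Fin q → Fin q → ℝ)
    (Cl : ∀ nA nB : ℕ, Strategy q m nA nB → Prop) : Prop :=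
  ∀ ε : ℝ, 0 ≤ ε → ∀ (nA nB : ℕ) (S : Strategy q m nA nB), Cl nA nB S →
    qval G - ε ≤ winProb G S → LocalDilation S T (κ ε) nuh

def gamePoly {q m nA nB : ℕ} (G : Game q m) (S : Strategy q m nA nB) :
    Matrix (Fin nA × Fin nB) (Fin nA × Fin nB) ℂ :=
  ∑ x, ∑ y, ∑ a, ∑ b,
    (((G.nu x y : ℝ) : ℂ) * (if G.D a b x y then 1 else 0)) • (S.A x a ⊗ₖ S.B y b)

def specGap {I : Type*} [Fintype I] [DecidableEq I] (M : Matrix I I ℂ) : ℝ :=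
  if h : M.IsHermitian then
    (((Finset.univ.val.map h.eigenvalues).sort (· ≤ ·)).getD (Fintype.card I - 1) 0) -
    (((Finset.univ.val.map h.eigenvalues).sort (· ≤ ·)).getD (Fintype.card I - 2) 0)
  else 0

def rhoA {nA nB : ℕ} (psi : Fin nA × Fin nB → ℂ) : Op nA :=
  Matrix.of fun i j => ∑ k, psi (i, k) * star (psi (j, k))

def rhoB {nA nB : ℕ} (psi : Fin nA × Fin nB → ℂ) : Op nB :=
  Matrix.of fun i j => ∑ k, psi (k, i) * star (psi (k, j))

def IsMaxEntG {I J : Type*} [Fintype I] [DecidableEq I] [Fintype J] (psi : I × J → ℂ) : Prop :=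
  Fintype.card I = Fintype.card J ∧
  ∃ (e : I → I → ℂ) (f : I → J → ℂ),
    (∀ i j, inn (e i) (e j) = if i = j then 1 else 0) ∧
    (∀ i j, inn (f i) (f j) = if i = j then 1 else 0) ∧
    ∀ p, psi p = ((Real.sqrt (Fintype.card I))⁻¹ : ℂ) * ∑ i, e i p.1 * f i p.2

def IsMaxEntIn {kA kB : ℕ} (v : Fin kA × Fin kB → ℂ) : Prop :=
  ∃ (d : ℕ), 0 < d ∧ ∃ (e : Fin d → Fin kA → ℂ) (f : Fin d → Fin kB → ℂ),
    (∀ i j, inn (e i) (e j) = if i = j then 1 else 0) ∧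
    (∀ i j, inn (f i) (f j) = if i = j then 1 else 0) ∧
    ∀ p, v p = ((Real.sqrt d)⁻¹ : ℂ) * ∑ i, e i p.1 * f i p.2

def hsNorm {n : ℕ} (M : Op n) : ℝ := Real.sqrt (Mᴴ * M).trace.re

def traceNorm {n : ℕ} (M : Op n) : ℝ :=
  ((Matrix.posSemidef_conjTranspose_mul_self M).1.eigenvectorUnitary.1 *
    diagonal (((↑) : ℝ → ℂ) ∘ (√·) ∘ (Matrix.posSemidef_conjTranspose_mul_self M).1.eigenvalues) *
    (star (Matrix.posSemidef_conjTranspose_mul_self M).1.eigenvectorUnitary : Op n)).trace.re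

namespace St19

variable {I J : Type*} [Fintype I] [Fintype J]

/-- inn as Euclidean inner product. -/
def eu (v : I → ℂ) : EuclideanSpace ℂ I := (WithLp.equiv 2 _).symm v

lemma inn_eq_inner (v w : I → ℂ) : inn v w = @inner ℂ _ _ (eu v) (eu w) := by
  simp [inn, eu, PiLp.inner_apply, RCLike.inner_apply, mul_comm]

lemma inn_self_re (v : I → ℂ) : (inn v v).re = ∑ i, Complex.normSq (v i) := by
  have : inn v v = ((∑ i, Complex.normSq (v i) : ℝ) : ℂ) := by
    rw [inn, Complex.ofReal_sum]
    exact Finset.sum_congr rfl fun i _ => by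
      rw [← Complex.mul_conj (v i)]; exact mul_comm _ _
  rw [this, Complex.ofReal_re]

lemma inn_self_re_nonneg (v : I → ℂ) : 0 ≤ (inn v v).re := by
  rw [inn_self_re]
  exact Finset.sum_nonneg fun i _ => Complex.normSq_nonneg _

lemma star_inn (v w : I → ℂ) : star (inn v w) = inn w v := by
  simp [inn, star_sum]; exact Finset.sum_congr rfl fun i _ => by ring

lemma nrm_eq_norm (v : I → ℂ) : nrm v = ‖eu v‖ := by
  rw [nrm, inn_eq_inner, ← RCLike.re_to_complex, inner_self_eq_norm_sq, Real.sqrt_sq (norm_nonneg _)]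

lemma nrm_sq (v : I → ℂ) : nrm v ^ 2 = (inn v v).re := by
  rw [nrm, Real.sq_sqrt (inn_self_re_nonneg v)]

/-- Cauchy–Schwarz, abs version. -/
lemma abs_inn_le (v w : I → ℂ) : ‖inn v w‖ ≤ nrm v * nrm w := by
  rw [inn_eq_inner, nrm_eq_norm, nrm_eq_norm]
  exact norm_inner_le_norm _ _

/-- Cauchy–Schwarz, normSq version. -/
lemma normSq_inn_le (v w : I → ℂ) :
    Complex.normSq (inn v w) ≤ (∑ i, Complex.normSq (v i)) * ∑ i, Complex.normSq (w i) := by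
  rw [← inn_self_re, ← inn_self_re, ← nrm_sq, ← nrm_sq, Complex.normSq_eq_norm_sq]
  have := abs_inn_le v w
  nlinarith [norm_nonneg (inn v w), mul_self_nonneg (nrm v)]

/-- Bessel. -/
lemma bessel {N : ℕ} (b : Fin N → I → ℂ)
    (hb : ∀ i j, inn (b i) (b j) = if i = j then 1 else 0) (x : I → ℂ) :
    ∑ j, Complex.normSq (inn (b j) x) ≤ (inn x x).re := by
  have hON : Orthonormal ℂ (fun j => eu (b j)) := by
    rw [orthonormal_iff_ite]
    intro i j
    rw [← inn_eq_inner, hb]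
  have H := hON.sum_inner_products_le (s := Finset.univ) (eu x)
  calc ∑ j, Complex.normSq (inn (b j) x)
      = ∑ j, ‖@inner ℂ _ _ (eu (b j)) (eu x)‖ ^ 2 := by
        refine Finset.sum_congr rfl fun j _ => ?_
        rw [← inn_eq_inner, Complex.sq_norm]
    _ ≤ ‖eu x‖ ^ 2 := H
    _ = (inn x x).re := by rw [← nrm_eq_norm, nrm_sq]

lemma inn_sub (a b : I → ℂ) :
    inn (fun i => a i - b i) (fun i => a i - b i)
      = inn a a - inn a b - inn b a + inn b b := by
  simp only [inn, star_sub, sub_mul, mul_sub, Finset.sum_sub_distrib]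
  ring

lemma inn_neg (a : I → ℂ) : inn (fun i => -a i) (fun i => -a i) = inn a a := by
  simp [inn]

lemma sum_expand {N : ℕ} (b : Fin N → I → ℂ) (c d : Fin N → ℂ) :
    ∑ s, star (∑ j, c j * b j s) * (∑ j, d j * b j s)
      = ∑ j, ∑ j', (star (c j) * d j') * inn (b j) (b j') := by
  have key : ∀ s : I, star (∑ j, c j * b j s) * (∑ j, d j * b j s)
      = ∑ j, ∑ j', (star (c j) * d j') * (star (b j s) * b j' s) := by
    intro s
    rw [star_sum, Finset.sum_mul_sum]
    exact Finset.sum_congr rfl fun j _ => Finset.sum_congr rfl fun j' _ => by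
      simp [star_mul']; ring
  rw [Finset.sum_congr rfl fun s _ => key s]
  rw [Finset.sum_comm]
  refine Finset.sum_congr rfl fun j _ => ?_
  rw [Finset.sum_comm]
  exact Finset.sum_congr rfl fun j' _ => by rw [inn, Finset.mul_sum]

/-- orthonormal expansion identity. -/
lemma sum_orth {N : ℕ} (b : Fin N → I → ℂ)
    (hb : ∀ i j, inn (b i) (b j) = if i = j then 1 else 0) (c d : Fin N → ℂ) :
    ∑ s, star (∑ j, c j * b j s) * (∑ j, d j * b j s) = ∑ j, star (c j) * d j := by
  rw [sum_expand]
  refine Finset.sum_congr rfl fun j _ => ?_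
  rw [Finset.sum_congr rfl fun j' _ => by rw [hb j j']]
  simp

/-- isometry preserves inn. -/
lemma inn_mulVec_isometry {M : Matrix I J ℂ} [DecidableEq J] (hM : Mᴴ * M = 1) (x y : J → ℂ) :
    inn (M.mulVec x) (M.mulVec y) = inn x y := by
  have h1 : inn (M.mulVec x) (M.mulVec y) = star (M.mulVec x) ⬝ᵥ (M.mulVec y) := rfl
  rw [h1, Matrix.star_mulVec, Matrix.dotProduct_mulVec, Matrix.vecMul_vecMul, hM,
    Matrix.vecMul_one]
  rfl

lemma kron_conjTranspose {K L : Type*} [Fintype K] [Fintype L]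
    (A : Matrix I J ℂ) (B : Matrix K L ℂ) : (A ⊗ₖ B)ᴴ = Aᴴ ⊗ₖ Bᴴ := by
  ext ⟨i, k⟩ ⟨j, l⟩
  simp [Matrix.conjTranspose_apply, Matrix.kroneckerMap_apply, mul_comm]


lemma sum4_factor {A B C D : Type*} [Fintype A] [Fintype B] [Fintype C] [Fintype D]
    (F : A → C → ℂ) (G : B → D → ℂ) :
    ∑ s : A, ∑ α : B, ∑ t : C, ∑ β : D, F s t * G α β
      = (∑ s, ∑ t, F s t) * (∑ α, ∑ β, G α β) := by
  rw [Finset.sum_mul]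
  refine Finset.sum_congr rfl fun s _ => ?_
  rw [Finset.sum_mul, Finset.sum_comm]
  refine Finset.sum_congr rfl fun t _ => ?_
  rw [Finset.mul_sum]
  refine Finset.sum_congr rfl fun α _ => ?_
  rw [Finset.mul_sum]

lemma inn_prod_family (g g' : I → ℂ) (h h' : J → ℂ) :
    inn (fun p : I × J => g p.1 * h p.2) (fun p => g' p.1 * h' p.2)
      = inn g g' * inn h h' := by
  simp only [inn, Fintype.sum_prod_type]
  rw [Finset.sum_mul_sum]
  refine Finset.sum_congr rfl fun a _ => Finset.sum_congr rfl fun b _ => ?_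
  simp only [star_mul']
  ring

lemma inn_dilTarget {a b kA kB : ℕ} (psit : Fin a × Fin b → ℂ) (aux : Fin kA × Fin kB → ℂ) :
    inn (dilTarget psit aux) (dilTarget psit aux) = inn psit psit * inn aux aux := by
  have key := sum4_factor (fun s t => star (psit (s, t)) * psit (s, t))
    (fun α β => star (aux (α, β)) * aux (α, β))
  simp only [inn, dilTarget, Fintype.sum_prod_type] at key ⊢
  rw [← key]
  refine Finset.sum_congr rfl fun s _ => Finset.sum_congr rfl fun α _ =>
    Finset.sum_congr rfl fun t _ => Finset.sum_congr rfl fun β _ => ?_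
  simp only [star_mul']
  ring

lemma inn_self_of_repr {N : ℕ} (psi : I × J → ℂ) (c : ℝ)
    (g : Fin N → I → ℂ) (h : Fin N → J → ℂ)
    (hg : ∀ i j, inn (g i) (g j) = if i = j then 1 else 0)
    (hh : ∀ i j, inn (h i) (h j) = if i = j then 1 else 0)
    (hrep : ∀ p, psi p = (c : ℂ) * ∑ i, g i p.1 * h i p.2) :
    inn psi psi = ((c ^ 2 * N : ℝ) : ℂ) := by
  have hB : ∀ i j, inn (fun p : I × J => g i p.1 * h i p.2)
      (fun p => g j p.1 * h j p.2) = if i = j then 1 else 0 := by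
    intro i j
    rw [inn_prod_family, hg, hh]
    by_cases hij : i = j <;> simp [hij]
  have hrep' : ∀ p : I × J, psi p = ∑ i, (c : ℂ) * (g i p.1 * h i p.2) := by
    intro p; rw [hrep p, Finset.mul_sum]
  have key := sum_orth (fun i (p : I × J) => g i p.1 * h i p.2) hB
    (fun _ => (c : ℂ)) (fun _ => (c : ℂ))
  rw [inn, Finset.sum_congr rfl fun p _ => by rw [hrep' p]]
  rw [key]
  simp [Complex.star_def, Complex.conj_ofReal, Finset.sum_const, Finset.card_univ]
  push_cast
  ring


lemma claim1_gen {P Q : Type*} [Fintype P] [Fintype Q] {N : ℕ} (c : ℂ)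
    (w : P → Q → ℂ) (u : Fin N → P → ℂ) (v : Fin N → Q → ℂ) :
    ∑ p, ∑ q, w p q * (c * ∑ i, u i p * v i q)
      = c * ∑ i, ∑ p, (∑ q, w p q * v i q) * u i p := by
  have lhs : ∀ (p : P) (q : Q), w p q * (c * ∑ i, u i p * v i q)
      = ∑ i, c * (w p q * (u i p * v i q)) := by
    intro p q
    simp only [Finset.mul_sum]
    exact Finset.sum_congr rfl fun i _ => by ring
  rw [Finset.sum_congr rfl fun p (_ : p ∈ Finset.univ) =>
    Finset.sum_congr rfl fun q _ => lhs p q]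
  rw [Finset.sum_congr rfl fun p (_ : p ∈ Finset.univ) => Finset.sum_comm]
  rw [Finset.sum_comm]
  rw [Finset.mul_sum]
  refine Finset.sum_congr rfl fun i _ => ?_
  rw [Finset.mul_sum]
  refine Finset.sum_congr rfl fun p _ => ?_
  rw [Finset.sum_mul, Finset.mul_sum]
  exact Finset.sum_congr rfl fun q _ => by ring

lemma factor_two {A B : Type*} [Fintype A] [Fintype B] {N : ℕ} (c : ℂ)
    (X : A → ℂ) (Y : B → ℂ) (g : Fin N → A → ℂ) (h : Fin N → B → ℂ) :
    ∑ a, ∑ b, (X a * Y b) * (c * ∑ i, g i a * h i b)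
      = c * ∑ i, (∑ a, X a * g i a) * (∑ b, Y b * h i b) := by
  have lhs : ∀ (a : A) (b : B), (X a * Y b) * (c * ∑ i, g i a * h i b)
      = ∑ i, c * ((X a * g i a) * (Y b * h i b)) := by
    intro a b
    simp only [Finset.mul_sum]
    exact Finset.sum_congr rfl fun i _ => by ring
  rw [Finset.sum_congr rfl fun a (_ : a ∈ Finset.univ) =>
    Finset.sum_congr rfl fun b _ => lhs a b]
  rw [Finset.sum_congr rfl fun a (_ : a ∈ Finset.univ) => Finset.sum_comm]
  rw [Finset.sum_comm]
  rw [Finset.mul_sum]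
  refine Finset.sum_congr rfl fun i _ => ?_
  rw [Finset.sum_mul_sum, Finset.mul_sum]
  refine Finset.sum_congr rfl fun a _ => ?_
  rw [Finset.mul_sum]

lemma inn_self_of_repr' {N : ℕ} (z : I × J → ℂ) (c : ℝ)
    (g : Fin N → I → ℂ)
    (hg : ∀ i j, inn (g i) (g j) = if i = j then 1 else 0)
    (C : Fin N → J → ℂ)
    (hrep : ∀ p, z p = (c : ℂ) * ∑ j, g j p.1 * C j p.2) :
    inn z z = ((c ^ 2 : ℝ) : ℂ) * ∑ j, inn (C j) (C j) := by
  have hrep' : ∀ p : I × J, z p = ∑ j, (c : ℂ) * (g j p.1 * C j p.2) := by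
    intro p; rw [hrep p, Finset.mul_sum]
  have key := sum_expand (fun j (p : I × J) => g j p.1 * C j p.2)
    (fun _ => (c : ℂ)) (fun _ => (c : ℂ))
  rw [inn, Finset.sum_congr rfl fun p _ => by rw [hrep' p]]
  rw [key]
  have : ∀ j j' : Fin N, inn (fun p : I × J => g j p.1 * C j p.2)
      (fun p => g j' p.1 * C j' p.2) = inn (g j) (g j') * inn (C j) (C j') :=
    fun j j' => inn_prod_family _ _ _ _
  rw [Finset.sum_congr rfl fun j (_ : j ∈ Finset.univ) =>
    Finset.sum_congr rfl fun j' _ => by rw [this j j', hg j j']]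
  rw [Finset.mul_sum]
  refine Finset.sum_congr rfl fun j _ => ?_
  rw [Finset.sum_eq_single j]
  · simp [Complex.star_def, Complex.conj_ofReal, pow_two, Complex.ofReal_mul]
  · intro j' _ hj'; simp [Ne.symm hj']
  · simp


def zfun {tn kA kB : ℕ} (psit : Fin tn × Fin tn → ℂ) (aux : Fin kA × Fin kB → ℂ)
    (vv : Fin tn × Fin kB → ℂ) : Fin tn × Fin kA → ℂ :=
  fun p => ∑ q, psit (p.1, q.1) * aux (p.2, q.2) * star (vv q)

lemma push1 {Q : Type*} [Fintype Q] {N : ℕ} (c : ℂ) (g : Fin N → ℂ)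
    (t : Fin N → Q → ℂ) (r : Q → ℂ) :
    ∑ q, (c * ∑ j, g j * t j q) * r q = c * ∑ j, g j * ∑ q, t j q * r q := by
  have lhs : ∀ q : Q, (c * ∑ j, g j * t j q) * r q
      = ∑ j, c * (g j * (t j q * r q)) := by
    intro q
    rw [Finset.mul_sum, Finset.sum_mul]
    exact Finset.sum_congr rfl fun j _ => by ring
  rw [Finset.sum_congr rfl fun q (_ : q ∈ Finset.univ) => lhs q, Finset.sum_comm,
    Finset.mul_sum]
  refine Finset.sum_congr rfl fun j _ => ?_
  rw [Finset.mul_sum, Finset.mul_sum]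

lemma claim3 {tn kA kB : ℕ} (htn : 0 < tn) (psit : Fin tn × Fin tn → ℂ)
    (te tf : Fin tn → Fin tn → ℂ)
    (hte : ∀ i j, inn (te i) (te j) = if i = j then 1 else 0)
    (htf : ∀ i j, inn (tf i) (tf j) = if i = j then 1 else 0)
    (hpte : ∀ p, psit p = ((Real.sqrt tn)⁻¹ : ℂ) * ∑ j, te j p.1 * tf j p.2)
    (aux : Fin kA × Fin kB → ℂ) (haux : inn aux aux = 1)
    (vv : Fin tn × Fin kB → ℂ) (hvv : inn vv vv = 1) :
    (tn : ℝ) * (inn (zfun psit aux vv) (zfun psit aux vv)).re ≤ 1 := by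
  classical
  have htnR : (0 : ℝ) < tn := by exact_mod_cast htn
  set C : Fin tn → Fin kA → ℂ :=
    fun j α => ∑ q : Fin tn × Fin kB, tf j q.1 * aux (α, q.2) * star (vv q) with hC
  -- representation of z
  have hrep : ∀ p : Fin tn × Fin kA, zfun psit aux vv p
      = (((Real.sqrt tn)⁻¹ : ℝ) : ℂ) * ∑ j, te j p.1 * C j p.2 := by
    intro p
    have e1 : ∀ q : Fin tn × Fin kB, psit (p.1, q.1) * aux (p.2, q.2) * star (vv q)
        = ((((Real.sqrt tn)⁻¹ : ℝ) : ℂ) * ∑ j, te j p.1 * tf j q.1)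
            * (aux (p.2, q.2) * star (vv q)) := by
      intro q; rw [hpte (p.1, q.1)]; push_cast; ring
    rw [zfun, Finset.sum_congr rfl fun q _ => e1 q,
      push1 ((((Real.sqrt tn)⁻¹ : ℝ)) : ℂ) (fun j => te j p.1) (fun j q => tf j q.1)
        (fun q => aux (p.2, q.2) * star (vv q))]
    congr 1
    refine Finset.sum_congr rfl fun j _ => ?_
    have hCa : C j p.2 = ∑ q : Fin tn × Fin kB, tf j q.1 * aux (p.2, q.2) * star (vv q) := rfl
    rw [hCa, Finset.mul_sum, Finset.mul_sum]
    exact Finset.sum_congr rfl fun q _ => by ring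
  have hzz : inn (zfun psit aux vv) (zfun psit aux vv)
      = ((((Real.sqrt tn)⁻¹) ^ 2 : ℝ) : ℂ) * ∑ j, inn (C j) (C j) :=
    inn_self_of_repr' _ _ te hte C hrep
  -- the auxiliary functions for Bessel
  set W : Fin tn → Fin tn → ℂ := fun j t => star (tf j t) with hW
  set hh : Fin kA → Fin tn → ℂ :=
    fun α t => ∑ β, aux (α, β) * star (vv (t, β)) with hhh
  have hWorth : ∀ j k, inn (W j) (W k) = if j = k then 1 else 0 := by
    intro j k
    have : inn (W j) (W k) = star (inn (tf j) (tf k)) := by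
      rw [inn, inn, star_sum]
      exact Finset.sum_congr rfl fun t _ => by simp [hW, star_mul', star_star]
    rw [this, htf j k]
    split <;> simp
  have hCval : ∀ j α, C j α = inn (W j) (hh α) := by
    intro j α
    have hCa : C j α = ∑ q : Fin tn × Fin kB, tf j q.1 * aux (α, q.2) * star (vv q) := rfl
    rw [hCa, inn, Fintype.sum_prod_type]
    refine Finset.sum_congr rfl fun t _ => ?_
    simp only [hW, hhh, star_star, Finset.mul_sum]
    exact Finset.sum_congr rfl fun β _ => by ring
  -- Bessel per α
  have hBess : ∀ α, ∑ j, Complex.normSq (C j α) ≤ (inn (hh α) (hh α)).re := by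
    intro α
    have := bessel W hWorth (hh α)
    calc ∑ j, Complex.normSq (C j α) = ∑ j, Complex.normSq (inn (W j) (hh α)) := by
          exact Finset.sum_congr rfl fun j _ => by rw [hCval]
      _ ≤ (inn (hh α) (hh α)).re := this
  -- bound on Σ_α ‖hh α‖²
  have hhbound : ∀ α t, Complex.normSq (hh α t)
      ≤ (∑ β, Complex.normSq (aux (α, β))) * ∑ β, Complex.normSq (vv (t, β)) := by
    intro α t
    have : hh α t = inn (fun β => star (aux (α, β))) (fun β => star (vv (t, β))) := by
      rw [inn, hhh]
      exact Finset.sum_congr rfl fun β _ => by simp [star_star]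
    rw [this]
    have := normSq_inn_le (fun β => star (aux (α, β))) (fun β => star (vv (t, β)))
    simpa [Complex.normSq_conj] using this
  have hsum : ∑ α, (inn (hh α) (hh α)).re ≤ 1 := by
    have e2 : ∀ α, (inn (hh α) (hh α)).re = ∑ t, Complex.normSq (hh α t) := fun α =>
      inn_self_re _
    calc ∑ α, (inn (hh α) (hh α)).re
        = ∑ α, ∑ t, Complex.normSq (hh α t) := Finset.sum_congr rfl fun α _ => e2 α
      _ ≤ ∑ α, ∑ t, (∑ β, Complex.normSq (aux (α, β))) * ∑ β, Complex.normSq (vv (t, β)) := by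
          exact Finset.sum_le_sum fun α _ => Finset.sum_le_sum fun t _ => hhbound α t
      _ = (∑ α, ∑ β, Complex.normSq (aux (α, β))) * ∑ t, ∑ β, Complex.normSq (vv (t, β)) := by
          rw [Finset.sum_mul_sum]
      _ = (inn aux aux).re * (inn vv vv).re := by
          rw [inn_self_re, inn_self_re, Fintype.sum_prod_type, Fintype.sum_prod_type]
      _ = 1 := by rw [haux, hvv]; simp
  -- put it together
  have hT : ∑ j, (inn (C j) (C j)).re ≤ 1 := by
    calc ∑ j, (inn (C j) (C j)).re
        = ∑ j, ∑ α, Complex.normSq (C j α) :=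
          Finset.sum_congr rfl fun j _ => inn_self_re _
      _ = ∑ α, ∑ j, Complex.normSq (C j α) := Finset.sum_comm
      _ ≤ ∑ α, (inn (hh α) (hh α)).re := Finset.sum_le_sum fun α _ => hBess α
      _ ≤ 1 := hsum
  have hre : (inn (zfun psit aux vv) (zfun psit aux vv)).re
      = ((Real.sqrt tn)⁻¹) ^ 2 * ∑ j, (inn (C j) (C j)).re := by
    rw [hzz, Complex.re_ofReal_mul, Complex.re_sum]
  rw [hre, inv_pow, Real.sq_sqrt htnR.le]
  have hTnonneg : 0 ≤ ∑ j, (inn (C j) (C j)).re :=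
    Finset.sum_nonneg fun j _ => inn_self_re_nonneg _
  calc (tn : ℝ) * (((tn : ℝ))⁻¹ * ∑ j, (inn (C j) (C j)).re)
      = ∑ j, (inn (C j) (C j)).re := by field_simp
    _ ≤ 1 := hT

end St19

/-- dimension estimate for approximately locally dilated
maximally entangled states. -/
theorem stmt19 {n tn kA kB : ℕ} (hn : n ≤ tn)
    (psi : Fin n × Fin n → ℂ) (psit : Fin tn × Fin tn → ℂ)
    (hpsi : IsMaxEntG psi) (hpsit : IsMaxEntG psit)
    (VA : Matrix (Fin tn × Fin kA) (Fin n) ℂ)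
    (VB : Matrix (Fin tn × Fin kB) (Fin n) ℂ)
    (hVA : VAᴴ * VA = 1) (hVB : VBᴴ * VB = 1)
    (aux : Fin kA × Fin kB → ℂ) (haux : inn aux aux = 1)
    (ε : ℝ) (hε : 0 ≤ ε)
    (h : nrm (fun p => (VA ⊗ₖ VB).mulVec psi p - dilTarget psit aux p) ≤ ε) :
    (1 - ε ^ 2) * (tn : ℝ) ≤ (n : ℝ) := by
  classical
  rcases Nat.eq_zero_or_pos tn with htn0 | htn
  · subst htn0; simp
  have htnR : (0:ℝ) < tn := by exact_mod_cast htn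
  obtain ⟨-, te, tf, hte, htf, hpte⟩ := hpsit
  simp only [Fintype.card_fin] at hpte
  have hpte' : ∀ p, psit p = (((Real.sqrt tn)⁻¹ : ℝ) : ℂ) * ∑ j, te j p.1 * tf j p.2 := by
    intro p; rw [hpte p]; push_cast; ring
  have hpsit1 : inn psit psit = 1 := by
    rw [St19.inn_self_of_repr psit _ te tf hte htf hpte']
    have e3 : ((Real.sqrt tn)⁻¹)^2 * (tn:ℝ) = 1 := by
      rw [inv_pow, Real.sq_sqrt htnR.le]; field_simp
    rw [e3]; norm_num
  have hη1 : inn (dilTarget psit aux) (dilTarget psit aux) = 1 := by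
    rw [St19.inn_dilTarget, hpsit1, haux, mul_one]
  rcases Nat.eq_zero_or_pos n with hn0 | hnpos
  · subst hn0
    have hzero : (fun p => (VA ⊗ₖ VB).mulVec psi p - dilTarget psit aux p)
        = fun p => -(dilTarget psit aux p) := by
      funext p
      simp [Matrix.mulVec, dotProduct]
    rw [hzero] at h
    have h1 : nrm (fun p => -(dilTarget psit aux p)) = 1 := by
      rw [nrm, St19.inn_neg, hη1, Complex.one_re, Real.sqrt_one]
    rw [h1] at h
    have hneg : 1 - ε^2 ≤ 0 := by nlinarith
    push_cast
    nlinarith [hneg, htnR]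
  have hnR : (0:ℝ) < n := by exact_mod_cast hnpos
  obtain ⟨-, e, f, he, hf, hpe⟩ := hpsi
  simp only [Fintype.card_fin] at hpe
  have hpe' : ∀ p, psi p = (((Real.sqrt n)⁻¹ : ℝ) : ℂ) * ∑ i, e i p.1 * f i p.2 := by
    intro p; rw [hpe p]; push_cast; ring
  have hpsi1 : inn psi psi = 1 := by
    rw [St19.inn_self_of_repr psi _ e f he hf hpe']
    have e3 : ((Real.sqrt n)⁻¹)^2 * (n:ℝ) = 1 := by
      rw [inv_pow, Real.sq_sqrt hnR.le]; field_simp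
    rw [e3]; norm_num
  have hkron : (VA ⊗ₖ VB)ᴴ * (VA ⊗ₖ VB) = 1 := by
    rw [St19.kron_conjTranspose, ← Matrix.mul_kronecker_mul, hVA, hVB,
      Matrix.one_kronecker_one]
  have hφ1 : inn ((VA ⊗ₖ VB).mulVec psi) ((VA ⊗ₖ VB).mulVec psi) = 1 := by
    rw [St19.inn_mulVec_isometry hkron, hpsi1]
  set S : ℂ := inn (dilTarget psit aux) ((VA ⊗ₖ VB).mulVec psi) with hSdef
  -- Step A
  have hA : 2 - 2 * S.re ≤ ε ^ 2 := by
    have h2 : (inn (fun p => (VA ⊗ₖ VB).mulVec psi p - dilTarget psit aux p)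
        (fun p => (VA ⊗ₖ VB).mulVec psi p - dilTarget psit aux p)).re ≤ ε ^ 2 := by
      rw [← St19.nrm_sq]
      have h0 : 0 ≤ nrm (fun p => (VA ⊗ₖ VB).mulVec psi p - dilTarget psit aux p) :=
        Real.sqrt_nonneg _
      nlinarith
    rw [St19.inn_sub ((VA ⊗ₖ VB).mulVec psi) (dilTarget psit aux)] at h2
    rw [hφ1, hη1] at h2
    have hst : inn ((VA ⊗ₖ VB).mulVec psi) (dilTarget psit aux) = star S := by
      rw [hSdef]; exact (St19.star_inn _ _).symm
    rw [hst, ← hSdef] at h2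
    simp only [Complex.sub_re, Complex.add_re, Complex.one_re, Complex.star_def,
      Complex.conj_re] at h2
    linarith
  -- Step B
  have hu : ∀ i, inn (VA.mulVec (e i)) (VA.mulVec (e i)) = 1 := fun i => by
    rw [St19.inn_mulVec_isometry hVA, he i i]; simp
  have hv : ∀ i, inn (VB.mulVec (f i)) (VB.mulVec (f i)) = 1 := fun i => by
    rw [St19.inn_mulVec_isometry hVB, hf i i]; simp
  have hφpq : ∀ (p : Fin tn × Fin kA) (q : Fin tn × Fin kB),
      (VA ⊗ₖ VB).mulVec psi (p, q)
        = (((Real.sqrt n)⁻¹ : ℝ) : ℂ) * ∑ i, VA.mulVec (e i) p * VB.mulVec (f i) q := by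
    intro p q
    have key := St19.factor_two ((((Real.sqrt n)⁻¹ : ℝ)) : ℂ)
      (fun a => VA p a) (fun b => VB q b) e f
    have e1 : ∀ (w1 w2 : Fin n), (VA ⊗ₖ VB) (p, q) (w1, w2) * psi (w1, w2)
        = (VA p w1 * VB q w2) * ((((Real.sqrt n)⁻¹ : ℝ) : ℂ) * ∑ i, e i w1 * f i w2) := by
      intro w1 w2
      rw [hpe' (w1, w2)]
      simp [Matrix.kroneckerMap_apply]
    show ∑ w : Fin n × Fin n, (VA ⊗ₖ VB) (p, q) w * psi w = _
    rw [Fintype.sum_prod_type, Finset.sum_congr rfl fun w1 (_ : w1 ∈ Finset.univ) =>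
      Finset.sum_congr rfl fun w2 _ => e1 w1 w2, key]
    rfl
  set Z : Fin n → (Fin tn × Fin kA → ℂ) :=
    fun i => St19.zfun psit aux (VB.mulVec (f i)) with hZ
  have hS' : S = (((Real.sqrt n)⁻¹ : ℝ) : ℂ) * ∑ i, inn (Z i) (VA.mulVec (e i)) := by
    have key := St19.claim1_gen ((((Real.sqrt n)⁻¹ : ℝ)) : ℂ)
      (fun (p : Fin tn × Fin kA) (q : Fin tn × Fin kB) =>
        star (psit (p.1, q.1)) * star (aux (p.2, q.2)))
      (fun i => VA.mulVec (e i)) (fun i => VB.mulVec (f i))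
    have e0 : S = ∑ p : Fin tn × Fin kA, ∑ q : Fin tn × Fin kB,
        (star (psit (p.1, q.1)) * star (aux (p.2, q.2))) *
          ((((Real.sqrt n)⁻¹ : ℝ) : ℂ) * ∑ i, VA.mulVec (e i) p * VB.mulVec (f i) q) := by
      rw [hSdef]
      show ∑ r : (Fin tn × Fin kA) × (Fin tn × Fin kB),
        star (dilTarget psit aux r) * ((VA ⊗ₖ VB).mulVec psi) r = _
      rw [Fintype.sum_prod_type]
      refine Finset.sum_congr rfl fun p _ => Finset.sum_congr rfl fun q _ => ?_
      rw [hφpq p q]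
      congr 1
      show star (psit (p.1, q.1) * aux (p.2, q.2)) = _
      rw [star_mul']
    rw [e0, key]
    congr 1
    refine Finset.sum_congr rfl fun i _ => ?_
    have hzp : ∀ p : Fin tn × Fin kA, star (Z i p)
        = ∑ q : Fin tn × Fin kB,
          (star (psit (p.1, q.1)) * star (aux (p.2, q.2))) * VB.mulVec (f i) q := by
      intro p
      show star (∑ q : Fin tn × Fin kB,
        psit (p.1, q.1) * aux (p.2, q.2) * star (VB.mulVec (f i) q)) = _
      rw [star_sum]
      exact Finset.sum_congr rfl fun q _ => by
        simp only [star_mul', star_star]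
    rw [inn]
    exact Finset.sum_congr rfl fun p _ => by rw [hzp p]
  -- claim 3 application
  have hzle : ∀ i, (tn:ℝ) * (inn (Z i) (Z i)).re ≤ 1 := fun i =>
    St19.claim3 htn psit te tf hte htf hpte aux haux (VB.mulVec (f i)) (hv i)
  -- assembling
  have hnrm_u : ∀ i, nrm (VA.mulVec (e i)) = 1 := fun i => by
    rw [nrm, hu i]; simp
  have hc'nonneg : (0:ℝ) ≤ (Real.sqrt n)⁻¹ := by positivity
  have habs : ‖S‖ ≤ (Real.sqrt n)⁻¹ * ∑ i, nrm (Z i) := by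
    rw [hS']
    rw [norm_mul, Complex.norm_real, Real.norm_of_nonneg hc'nonneg]
    have h1 : ‖∑ i, inn (Z i) (VA.mulVec (e i))‖ ≤ ∑ i, nrm (Z i) := by
      calc ‖∑ i, inn (Z i) (VA.mulVec (e i))‖
          ≤ ∑ i, ‖inn (Z i) (VA.mulVec (e i))‖ := by
            simpa using
              norm_sum_le Finset.univ (fun i => inn (Z i) (VA.mulVec (e i)))
        _ ≤ ∑ i, nrm (Z i) := Finset.sum_le_sum fun i _ => by
            have h2 := St19.abs_inn_le (Z i) (VA.mulVec (e i))
            rwa [hnrm_u i, mul_one] at h2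
    exact mul_le_mul_of_nonneg_left h1 hc'nonneg
  have hsq : Complex.normSq S ≤ ∑ i, (inn (Z i) (Z i)).re := by
    have h3 : (∑ i, nrm (Z i))^2 ≤ (n:ℝ) * ∑ i, nrm (Z i)^2 := by
      have h3' := sq_sum_le_card_mul_sum_sq (s := Finset.univ)
        (f := fun i : Fin n => nrm (Z i))
      simpa using h3'
    have h4 : ∀ i : Fin n, nrm (Z i)^2 = (inn (Z i) (Z i)).re := fun i => St19.nrm_sq _
    have h6 : ((Real.sqrt n)⁻¹)^2 * (n:ℝ) = 1 := by
      rw [inv_pow, Real.sq_sqrt hnR.le]; field_simp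
    have habs2 : ‖S‖ ^ 2 ≤ ((Real.sqrt n)⁻¹)^2 * (∑ i, nrm (Z i))^2 := by
      rw [← mul_pow]
      exact pow_le_pow_left₀ (norm_nonneg S) habs 2
    calc Complex.normSq S = ‖S‖ ^ 2 := (Complex.sq_norm S).symm
      _ ≤ ((Real.sqrt n)⁻¹)^2 * (∑ i, nrm (Z i))^2 := habs2
      _ ≤ ((Real.sqrt n)⁻¹)^2 * ((n:ℝ) * ∑ i, nrm (Z i)^2) := by
          have := mul_le_mul_of_nonneg_left h3 (by positivity : (0:ℝ) ≤ ((Real.sqrt n)⁻¹)^2)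
          exact this
      _ = (((Real.sqrt n)⁻¹)^2 * (n:ℝ)) * ∑ i, nrm (Z i)^2 := by ring
      _ = ∑ i, nrm (Z i)^2 := by rw [h6, one_mul]
      _ = ∑ i, (inn (Z i) (Z i)).re := Finset.sum_congr rfl fun i _ => h4 i
  have hBig : (tn:ℝ) * Complex.normSq S ≤ (n:ℝ) := by
    calc (tn:ℝ) * Complex.normSq S ≤ (tn:ℝ) * ∑ i, (inn (Z i) (Z i)).re :=
          mul_le_mul_of_nonneg_left hsq htnR.le
      _ = ∑ i, (tn:ℝ) * (inn (Z i) (Z i)).re := Finset.mul_sum _ _ _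
      _ ≤ ∑ _i : Fin n, (1:ℝ) := Finset.sum_le_sum fun i _ => hzle i
      _ = n := by simp
  have hr : S.re ^ 2 ≤ Complex.normSq S := by
    rw [Complex.normSq_apply]; nlinarith [sq_nonneg S.im]
  rcases le_or_gt (2 - ε^2) 0 with hcase | hcase
  · nlinarith [Complex.normSq_nonneg S]
  · have h8 : ((2 - ε^2)/2)^2 ≤ S.re^2 := by nlinarith
    have h9 : (tn:ℝ) * ((2 - ε^2)/2)^2 ≤ (tn:ℝ) * Complex.normSq S :=
      mul_le_mul_of_nonneg_left (le_trans h8 hr) htnR.le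
    nlinarith [h9, hBig, mul_nonneg htnR.le (sq_nonneg (ε^2))]


end
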